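/- Let O be a complete discrete valuation ring with uniformizer ϖ, fraction field K, and let K'/K be an unramified quadratic extension with ring of integers O' and Galois involution a ↦ ā. Let V be a finite-dimensional K'-vector space with a nondegenerate K'/K-Hermitian form, and let Λ ⊂ V be a full-rank O'-lattice satisfying Λ ⊆ Λ^∨ ⊆ ϖ^{-1}Λ, where Λ^∨ = {x ∈ V : (x, Λ) ⊆ O'}. If E ⊂ V is a totally isotropic K'-subspace, set Λ' := (E^⊥ ∩ Λ)/(E ∩ Λ), a lattice in the Hermitian space E^⊥/E with the induced Hermitian form. Then Λ' ⊆ (Λ')^∨ ⊆ ϖ^{-1}Λ'. -/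

import Mathlib

open Module

set_option maxHeartbeats 1000000 in
/-- Duality lemma: any linear functional vanishing on `E^⊥` is of the form `φ(·, e)`
for some `e ∈ E`. -/
theorem aux_dual
    {F V : Type*} [Field F]
    (σ : F ≃+* F) (hσinv : ∀ x, σ (σ x) = x)
    [AddCommGroup V] [Module F V] [FiniteDimensional F V]
    (φ : V →ₗ[F] V →ₛₗ[(σ : F →+* F)] F)
    (hherm : ∀ x y : V, φ x y = σ (φ y x))
    (hnd : ∀ x : V, (∀ y : V, φ x y = 0) → x = 0)
    (E : Subspace F V)
    (g : V →ₗ[F] F)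
    (hg : ∀ w : V, (∀ e ∈ E, φ w e = 0) → g w = 0) :
    ∃ e ∈ E, ∀ y : V, φ y e = g y := by
  haveI : RingHomSurjective (σ : F →+* F) := ⟨σ.surjective⟩
  set S : E →ₛₗ[(σ : F →+* F)] Module.Dual F V := (LinearMap.flip φ).domRestrict E with hSdef
  have hSapp : ∀ (e : E) (y : V), S e y = φ y (e : V) := fun e y => rfl
  set Sub1 : Submodule F (Module.Dual F V) := LinearMap.range S with hSub1
  set W : Subspace F V := Sub1.dualCoannihilator with hWdef
  have hWmem : ∀ x : V, x ∈ W ↔ ∀ e ∈ E, φ x e = 0 := by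
    intro x
    rw [hWdef, Submodule.mem_dualCoannihilator]
    constructor
    · intro hx e he
      exact hx (S ⟨e, he⟩) ⟨⟨e, he⟩, rfl⟩
    · rintro hx f ⟨e, rfl⟩
      exact hx (e : V) e.2
  have hS0 : ∀ e : E, S e = 0 → e = 0 := by
    intro e he
    have h2 : ∀ y : V, φ (e : V) y = 0 := by
      intro y
      have h3 : S e y = 0 := by rw [he]; rfl
      rw [hSapp] at h3
      rw [hherm, h3, map_zero]
    have := hnd _ h2
    exact Subtype.ext this
  -- a basis of Sub1
  set n := finrank F E with hn
  let bE : Basis (Fin n) F E := Module.finBasis F E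
  have hu : LinearIndependent F (fun i => S (bE i)) := by
    rw [Fintype.linearIndependent_iff]
    intro c hc
    have key : S (∑ i, σ (c i) • bE i) = 0 := by
      rw [map_sum]
      simp_rw [LinearMap.map_smulₛₗ, RingEquiv.coe_toRingHom, hσinv]
      exact hc
    have h2 := hS0 _ key
    have h3 := Fintype.linearIndependent_iff.mp bE.linearIndependent _ h2
    intro i
    have := h3 i
    calc c i = σ (σ (c i)) := (hσinv _).symm
    _ = σ 0 := by rw [this]
    _ = 0 := map_zero _
  set u' : Fin n → Sub1 := fun i => ⟨S (bE i), ⟨bE i, rfl⟩⟩ with hu'def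
  have hu'li : LinearIndependent F u' := by
    refine (Fintype.linearIndependent_iff (ι := Fin n) (R := F) (M := ↥Sub1) (v := u')).mpr
      fun c hc => ?_
    refine Fintype.linearIndependent_iff.mp hu c ?_
    have h1 := congrArg (Subtype.val) hc
    rw [Submodule.coe_sum, ZeroMemClass.coe_zero] at h1
    simpa only [Submodule.coe_smul] using h1
  have hu'span : ⊤ ≤ Submodule.span F (Set.range u') := by
    rintro ⟨f, hf⟩ _
    obtain ⟨e, rfl⟩ := hf
    have hsum : (↑(∑ i, σ (bE.repr e i) • u' i) : Module.Dual F V) = S e := by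
      rw [Submodule.coe_sum]
      simp_rw [Submodule.coe_smul]
      conv_rhs => rw [← bE.sum_repr e]
      rw [map_sum]
      simp_rw [LinearMap.map_smulₛₗ]
      rfl
    have hmem : (∑ i, σ (bE.repr e i) • u' i) ∈ Submodule.span F (Set.range u') :=
      Submodule.sum_mem _ fun i _ => Submodule.smul_mem _ _ (Submodule.subset_span ⟨i, rfl⟩)
    have : (⟨S e, ⟨e, rfl⟩⟩ : Sub1) = ∑ i, σ (bE.repr e i) • u' i := by
      apply Subtype.ext
      rw [hsum]
    rw [this]
    exact hmem
  have hfr1 : finrank F Sub1 = n := by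
    have h1 := finrank_span_eq_card (R := F) (M := ↥Sub1) (b := u') hu'li
    rw [top_le_iff.mp hu'span] at h1
    rw [finrank_top F ↥Sub1] at h1
    rw [Fintype.card_fin] at h1
    exact h1
  have hfr2 := Subspace.finrank_add_finrank_dualCoannihilator_eq Sub1
  rw [← hWdef] at hfr2
  set Sub2 : Submodule F (Module.Dual F V) := W.dualAnnihilator with hSub2
  have hfr3 : finrank F (V ⧸ W) = finrank F Sub2 :=
    LinearEquiv.finrank_eq (Subspace.quotEquivAnnihilator W)
  have hfr4 := Submodule.finrank_quotient_add_finrank W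
  have hle : Sub1 ≤ Sub2 := Submodule.le_dualCoannihilator_dualAnnihilator Sub1
  have heq : Sub1 = Sub2 := Submodule.eq_of_le_of_finrank_eq hle (by omega)
  have hgmem : g ∈ Sub2 :=
    (Submodule.mem_dualAnnihilator g).mpr (fun w hw => hg w ((hWmem w).mp hw))
  rw [← heq] at hgmem
  obtain ⟨e, rfl⟩ := hgmem
  exact ⟨e, e.2, fun y => (hSapp e y).symm⟩

set_option maxHeartbeats 1000000 in
/-- Lemma 3.1, first part, of "More AFL conjectures: Bessel subgroups".
`O` is a complete discrete valuation ring (the ring of integers `O'` of the unramified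
quadratic extension `K'/K`), `F = K'` its fraction field, `ϖ` a uniformizer, `σ` the Galois
involution of `K'/K` (preserving `O`).  `V` is a finite-dimensional `F`-vector space equipped
with a nondegenerate `σ`-Hermitian form `φ`, and `Λ` is a full-rank `O`-lattice with
`Λ ⊆ Λ^∨ ⊆ ϖ⁻¹Λ`, where `Λ^∨ = {x | φ(x,Λ) ⊆ O}`.  For a totally isotropic subspace `E`,
the induced lattice `Λ' = (E^⊥ ∩ Λ)/(E ∩ Λ)` in `E^⊥/E` (with the induced Hermitian form)
again satisfies `Λ' ⊆ Λ'^∨ ⊆ ϖ⁻¹Λ'`.  Everything about the quotient `E^⊥/E` is expressed in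
terms of representatives lying in `E^⊥ = {x | ∀ y ∈ E, φ x y = 0}`:
(a) `Λ' ⊆ Λ'^∨`: the form is integral on `E^⊥ ∩ Λ`;
(b) `Λ'^∨ ⊆ ϖ⁻¹Λ'`: if `x ∈ E^⊥` pairs integrally with all of `E^⊥ ∩ Λ`, then
    `ϖ • x ∈ (E^⊥ ∩ Λ) + E`, i.e. the class of `ϖ • x` lies in `Λ'`. -/
theorem stmt0
    {O F V : Type*} [CommRing O] [IsDomain O] [IsDiscreteValuationRing O]
    [IsAdicComplete (IsLocalRing.maximalIdeal O) O]
    [Field F] [Algebra O F] [IsFractionRing O F]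
    (ϖ : O) (hϖ : Irreducible ϖ)
    (σ : F ≃+* F) (hσinv : ∀ x, σ (σ x) = x)
    (hσO : ∀ a : O, σ (algebraMap O F a) ∈ (algebraMap O F).range)
    [AddCommGroup V] [Module F V] [FiniteDimensional F V]
    [Module O V] [IsScalarTower O F V]
    (φ : V →ₗ[F] V →ₛₗ[(σ : F →+* F)] F)
    (hherm : ∀ x y : V, φ x y = σ (φ y x))
    (hnd : ∀ x : V, (∀ y : V, φ x y = 0) → x = 0)
    (Λ : Submodule O V) (hfg : Λ.FG)
    (hfull : Submodule.span F (Λ : Set V) = ⊤)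
    -- `Λ ⊆ Λ^∨` :
    (hint : ∀ x ∈ Λ, ∀ y ∈ Λ, φ x y ∈ (algebraMap O F).range)
    -- `Λ^∨ ⊆ ϖ⁻¹Λ` :
    (hvert : ∀ x : V, (∀ y ∈ Λ, φ x y ∈ (algebraMap O F).range) → ϖ • x ∈ Λ)
    (E : Subspace F V) (hiso : ∀ x ∈ E, ∀ y ∈ E, φ x y = 0) :
    -- (a)  `Λ' ⊆ Λ'^∨`
    (∀ x : V, x ∈ Λ → (∀ e ∈ E, φ x e = 0) →
      ∀ y : V, y ∈ Λ → (∀ e ∈ E, φ y e = 0) →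
        φ x y ∈ (algebraMap O F).range) ∧
    -- (b)  `Λ'^∨ ⊆ ϖ⁻¹Λ'`
    (∀ x : V, (∀ e ∈ E, φ x e = 0) →
      (∀ y : V, y ∈ Λ → (∀ e ∈ E, φ y e = 0) → φ x y ∈ (algebraMap O F).range) →
      ∃ z : V, z ∈ Λ ∧ (∀ e ∈ E, φ z e = 0) ∧ ∃ e ∈ E, ϖ • x = z + e) := by
  classical
  constructor
  · intro x hx _ y hy _
    exact hint x hx y hy
  · intro x hxperp hxint
    -- the subspace W = E^⊥
    set W : Subspace F V :=
      { carrier := {w | ∀ e ∈ E, φ w e = 0}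
        add_mem' := by
          intro a b ha hb e he
          rw [map_add, LinearMap.add_apply, ha e he, hb e he, add_zero]
        zero_mem' := by
          intro e he
          rw [map_zero, LinearMap.zero_apply]
        smul_mem' := by
          intro c a ha e he
          rw [map_smul, LinearMap.smul_apply, ha e he, smul_zero] } with hWdef
    have hWmem : ∀ w : V, w ∈ W ↔ ∀ e ∈ E, φ w e = 0 := fun w => Iff.rfl
    set WO : Submodule O V := W.restrictScalars O with hWO
    set N : Submodule O (V ⧸ WO) := Λ.map WO.mkQ with hN
    haveI hNfin : Module.Finite O N := Module.Finite.iff_fg.mpr (hfg.map WO.mkQ)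
    haveI : NoZeroSMulDivisors O (V ⧸ WO) := by
      refine ⟨fun {a q} haq => ?_⟩
      by_cases ha : a = 0
      · exact Or.inl ha
      refine Or.inr ?_
      obtain ⟨v, rfl⟩ := WO.mkQ_surjective q
      have h1 : WO.mkQ (a • v) = 0 := by rw [map_smul]; exact haq
      have h2 : a • v ∈ WO := by
        rwa [Submodule.mkQ_apply, Submodule.Quotient.mk_eq_zero] at h1
      have hα : algebraMap O F a ≠ 0 :=
        (map_ne_zero_iff _ (IsFractionRing.injective O F)).mpr ha
      have h3 : (algebraMap O F a) • v ∈ W := by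
        rw [algebraMap_smul]
        exact h2
      have hv : v ∈ W := by
        have h4 := W.smul_mem (algebraMap O F a)⁻¹ h3
        rwa [inv_smul_smul₀ hα] at h4
      rw [Submodule.mkQ_apply, Submodule.Quotient.mk_eq_zero]
      exact hv
    haveI : Module.Free O N := Module.free_of_finite_type_torsion_free'
    set ι := Module.Free.ChooseBasisIndex O N with hι
    let b : Basis ι O N := Module.Free.chooseBasis O N
    have hy : ∀ i, ∃ v, v ∈ Λ ∧ WO.mkQ v = ((b i : V ⧸ WO)) := by
      intro i
      obtain ⟨v, hv1, hv2⟩ := Submodule.mem_map.mp (b i).2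
      exact ⟨v, hv1, hv2⟩
    choose y hyΛ hymk using hy
    -- linear independence of the images of y in V ⧸ W (over F)
    have hliv : LinearIndependent F (fun i => W.mkQ (y i)) := by
      rw [Fintype.linearIndependent_iff]
      intro c hc
      obtain ⟨d, hd⟩ := IsLocalization.exist_integer_multiples_of_finite
        (nonZeroDivisors O) c
      have hd' : ∀ i, ∃ a : O, algebraMap O F a = (d : O) • c i := fun i => hd i
      choose a ha using hd'
      have hsumW : (∑ i, c i • y i) ∈ W := by
        have h1 : W.mkQ (∑ i, c i • y i) = 0 := by
          rw [map_sum]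
          simp_rw [map_smul]
          exact hc
        rwa [Submodule.mkQ_apply, Submodule.Quotient.mk_eq_zero] at h1
      have hsum2 : (∑ i, a i • y i) ∈ W := by
        have heq : (∑ i, a i • y i) = (algebraMap O F (d : O)) • ∑ i, c i • y i := by
          rw [Finset.smul_sum]
          refine Finset.sum_congr rfl fun i _ => ?_
          rw [← algebraMap_smul F (a i) (y i), ha i, Algebra.smul_def, mul_smul,
            algebraMap_smul]
        rw [heq]
        exact W.smul_mem _ hsumW
      have h0 : (∑ i, a i • b i : N) = 0 := by
        apply Subtype.val_injective
        rw [Submodule.coe_sum, ZeroMemClass.coe_zero]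
        simp_rw [Submodule.coe_smul, ← hymk, ← map_smul WO.mkQ]
        rw [← map_sum WO.mkQ, Submodule.mkQ_apply, Submodule.Quotient.mk_eq_zero]
        exact hsum2
      have hai := Fintype.linearIndependent_iff.mp b.linearIndependent _ h0
      intro i
      have h6 : algebraMap O F (a i) = 0 := by rw [hai i, map_zero]
      rw [ha i, Algebra.smul_def] at h6
      rcases mul_eq_zero.mp h6 with h7 | h7
      · exact absurd h7 ((map_ne_zero_iff _ (IsFractionRing.injective O F)).mpr
          (nonZeroDivisors.coe_ne_zero d))
      · exact h7
    -- the functional h y = φ y x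
    set h : V →ₗ[F] F := LinearMap.flip φ x with hh
    have happ : ∀ v : V, h v = φ v x := fun v => rfl
    -- construct the extension g
    set vfam : ι → V ⧸ W := fun i => W.mkQ (y i) with hvfam
    set U : Submodule F (V ⧸ W) := Submodule.span F (Set.range vfam) with hU
    let bU : Basis ι F U := Basis.span hliv
    have hbU : ∀ i, (bU i : V ⧸ W) = vfam i := fun i => congrArg Subtype.val (Basis.span_apply hliv i)
    let f : U →ₗ[F] F := bU.constr ℕ (fun i => h (y i))
    obtain ⟨g0, hg0⟩ := LinearMap.exists_extend f
    set g : V →ₗ[F] F := g0.comp W.mkQ with hg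
    have hgW : ∀ w ∈ W, g w = 0 := by
      intro w hw
      show g0 (W.mkQ w) = 0
      rw [Submodule.mkQ_apply, (Submodule.Quotient.mk_eq_zero W).mpr hw, map_zero]
    have hgyi : ∀ i, g (y i) = h (y i) := by
      intro i
      have hmem : vfam i ∈ U := Submodule.subset_span ⟨i, rfl⟩
      have h1 : (⟨vfam i, hmem⟩ : U) = bU i := Subtype.ext (hbU i).symm
      have h2 : g (y i) = g0 (U.subtype ⟨vfam i, hmem⟩) := rfl
      rw [h2, ← LinearMap.comp_apply, hg0, h1, Basis.constr_basis]
    -- get e ∈ E with φ(·, e) = g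
    obtain ⟨e, heE, hge⟩ := aux_dual σ hσinv φ hherm hnd E g
      (fun w hw => hgW w ((hWmem w).mpr hw))
    -- x - e pairs integrally with all of Λ
    have hall : ∀ v ∈ Λ, φ (x - e) v ∈ (algebraMap O F).range := by
      intro v hv
      have hvN : WO.mkQ v ∈ N := ⟨v, hv, rfl⟩
      set c : ι → O := fun i => b.repr ⟨WO.mkQ v, hvN⟩ i with hc
      have hrepr : (∑ i, c i • b i : N) = ⟨WO.mkQ v, hvN⟩ := b.sum_repr _
      set w : V := v - ∑ i, c i • y i with hwdef
      have hwWO : w ∈ WO := by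
        have h1 : ((∑ i, c i • b i : N) : V ⧸ WO) = WO.mkQ v := by rw [hrepr]
        have h2 : ((∑ i, c i • b i : N) : V ⧸ WO) = WO.mkQ (∑ i, c i • y i) := by
          rw [Submodule.coe_sum, map_sum]
          simp_rw [Submodule.coe_smul, map_smul, hymk]
        have h3 : WO.mkQ w = 0 := by
          rw [hwdef, map_sub, ← h2, h1, sub_self]
        rwa [Submodule.mkQ_apply, Submodule.Quotient.mk_eq_zero] at h3
      have hwW : w ∈ W := hwWO
      have hwΛ : w ∈ Λ := Λ.sub_mem hv
        (Submodule.sum_mem _ fun i _ => Λ.smul_mem (c i) (hyΛ i))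
      -- h v - g v = h w
      have hhv : h v = h w + ∑ i, c i • h (y i) := by
        have : v = w + ∑ i, c i • y i := by rw [hwdef]; abel
        rw [this, map_add, map_sum]
        simp_rw [LinearMap.map_smul_of_tower]
      have hgv : g v = ∑ i, c i • h (y i) := by
        have : v = w + ∑ i, c i • y i := by rw [hwdef]; abel
        rw [this, map_add, map_sum, hgW w hwW, zero_add]
        simp_rw [LinearMap.map_smul_of_tower]
        exact Finset.sum_congr rfl fun i _ => by rw [hgyi i]
      have hdiff : φ v (x - e) = h w := by
        have h1 : φ v (x - e) = φ v x - φ v e := map_sub _ _ _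
        rw [h1, ← happ v, hge v, hhv, hgv]
        abel
      have hfin : φ (x - e) v = φ x w := by
        rw [hherm, hdiff, happ, hherm w x, hσinv]
      rw [hfin]
      exact hxint w hwΛ (fun e' he' => hwW e' he')
    have hzΛ : ϖ • (x - e) ∈ Λ := hvert _ hall
    refine ⟨ϖ • (x - e), hzΛ, ?_, ϖ • e, ?_, ?_⟩
    · intro e' he'
      rw [← algebraMap_smul F ϖ (x - e), map_smul, LinearMap.smul_apply,
        map_sub, LinearMap.sub_apply, hxperp e' he', hiso e heE e' he', sub_zero,
        smul_zero]
    · rw [← algebraMap_smul F ϖ e]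
      exact E.smul_mem _ heE
    · rw [smul_sub, sub_add_cancel]
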